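/- Let n ≥ 1, λ > 0, and r, δ ∈ ℝ^n with Φ(r) ≥ 4n and ‖δ‖_∞ ≤ 1/(5λ). Then ‖∇Φ(r + δ) − ∇Φ(r)‖₂ ≤ (1/3)·‖∇Φ(r)‖₂. -/

import Mathlib

open Real Finset

lemma exp_fifth_le : Real.exp (1/5) ≤ 5/4 := by
  have h5 : Real.exp (1/5) ^ 5 = Real.exp 1 := by
    rw [← Real.exp_nat_mul]; norm_num
  by_contra h
  push_neg at h
  have h2 : (5/4:ℝ)^5 < Real.exp (1/5) ^ 5 :=
    pow_lt_pow_left₀ h (by norm_num) (by norm_num)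
  have := Real.exp_one_lt_d9
  rw [h5] at h2
  norm_num at h2
  linarith

lemma sinh_pert (t d : ℝ) (hd : |d| ≤ 1/5) :
    (Real.sinh (t + d) - Real.sinh t) ^ 2 ≤ (1/16) * Real.cosh t ^ 2 := by
  have hc1 : Real.cosh d ≤ Real.cosh (1/5) := by
    rw [Real.cosh_le_cosh]; exact hd.trans (le_abs_self _)
  have hs1 : |Real.sinh d| ≤ Real.sinh (1/5) := by
    rw [Real.abs_sinh, Real.sinh_le_sinh]; exact hd
  have hst : |Real.sinh t| ≤ Real.cosh t := by
    have := Real.cosh_sq t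
    have h1 := sq_abs (Real.sinh t)
    nlinarith [abs_nonneg (Real.sinh t), Real.cosh_pos t]
  have hcd1 : 1 ≤ Real.cosh d := Real.one_le_cosh d
  have hsum : Real.cosh (1/5) - 1 + Real.sinh (1/5) ≤ 1/4 := by
    have := Real.cosh_add_sinh (1/5)
    have := exp_fifth_le
    linarith
  have key : |Real.sinh (t + d) - Real.sinh t| ≤ (1/4) * Real.cosh t := by
    rw [Real.sinh_add]
    have heq : Real.sinh t * Real.cosh d + Real.cosh t * Real.sinh d - Real.sinh t
        = Real.sinh t * (Real.cosh d - 1) + Real.cosh t * Real.sinh d := by ring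
    rw [heq]
    calc |Real.sinh t * (Real.cosh d - 1) + Real.cosh t * Real.sinh d|
        ≤ |Real.sinh t * (Real.cosh d - 1)| + |Real.cosh t * Real.sinh d| := abs_add_le _ _
      _ = |Real.sinh t| * (Real.cosh d - 1) + Real.cosh t * |Real.sinh d| := by
          rw [abs_mul, abs_mul, abs_of_nonneg (show (0:ℝ) ≤ Real.cosh d - 1 by linarith),
            abs_of_pos (Real.cosh_pos t)]
      _ ≤ Real.cosh t * (Real.cosh (1/5) - 1) + Real.cosh t * Real.sinh (1/5) := by
          have := Real.cosh_pos t
          have := abs_nonneg (Real.sinh t)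
          nlinarith
      _ = Real.cosh t * (Real.cosh (1/5) - 1 + Real.sinh (1/5)) := by ring
      _ ≤ (1/4) * Real.cosh t := by nlinarith [Real.cosh_pos t]
  nlinarith [sq_abs (Real.sinh (t + d) - Real.sinh t), abs_nonneg (Real.sinh (t + d) - Real.sinh t), Real.cosh_pos t]

/-- For the potential `Φ(r) = Σ cosh(λ r_i)` with gradient `∇Φ(r)_i = λ sinh(λ r_i)`:
if `Φ(r) ≥ 4n` and `‖δ‖_∞ ≤ 1/(5λ)`, then
`‖∇Φ(r + δ) − ∇Φ(r)‖₂ ≤ ‖∇Φ(r)‖₂/3`. -/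
theorem grad_potential_stability {n : ℕ} (hn : 1 ≤ n) (lam : ℝ) (hlam : 0 < lam)
    (r δ : Fin n → ℝ)
    (hΦ : (4 * n : ℝ) ≤ ∑ i, Real.cosh (lam * r i))
    (hδ : (⨆ i, |δ i|) ≤ 1 / (5 * lam)) :
    Real.sqrt (∑ i,
        (lam * Real.sinh (lam * (r i + δ i)) - lam * Real.sinh (lam * r i)) ^ 2) ≤
      (1 / 3) * Real.sqrt (∑ i, (lam * Real.sinh (lam * r i)) ^ 2) := by
  set S := ∑ i, (lam * Real.sinh (lam * r i)) ^ 2 with hS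
  -- |lam * δ i| ≤ 1/5
  have hdi : ∀ i, |lam * δ i| ≤ 1/5 := by
    intro i
    have hle : |δ i| ≤ 1 / (5 * lam) := by
      exact le_trans (le_ciSup (f := fun i => |δ i|) ((Set.finite_range _).bddAbove) i) hδ
    rw [abs_mul, abs_of_pos hlam]
    calc lam * |δ i| ≤ lam * (1 / (5 * lam)) := by
          exact mul_le_mul_of_nonneg_left hle hlam.le
      _ = 1/5 := by field_simp
  -- pointwise bound summed
  have hpt : ∑ i, (lam * Real.sinh (lam * (r i + δ i)) - lam * Real.sinh (lam * r i)) ^ 2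
      ≤ (1/16) * ∑ i, (lam ^ 2 * Real.cosh (lam * r i) ^ 2) := by
    rw [Finset.mul_sum]
    refine Finset.sum_le_sum fun i _ => ?_
    have h := sinh_pert (lam * r i) (lam * δ i) (hdi i)
    have heq : lam * (r i + δ i) = lam * r i + lam * δ i := by ring
    rw [heq]
    have : (lam * Real.sinh (lam * r i + lam * δ i) - lam * Real.sinh (lam * r i)) ^ 2
        = lam ^ 2 * (Real.sinh (lam * r i + lam * δ i) - Real.sinh (lam * r i)) ^ 2 := by ring
    rw [this]
    nlinarith [sq_nonneg lam]
  -- Cauchy-Schwarz: (∑ cosh)^2 ≤ n * ∑ cosh^2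
  have hCS : (∑ i, Real.cosh (lam * r i)) ^ 2 ≤ (n : ℝ) * ∑ i, Real.cosh (lam * r i) ^ 2 := by
    have h := sq_sum_le_card_mul_sum_sq (s := (Finset.univ : Finset (Fin n)))
        (f := fun i => Real.cosh (lam * r i))
    simpa using h
  -- ∑ cosh^2 = ∑ sinh^2 + n
  have hsplit : ∑ i, Real.cosh (lam * r i) ^ 2 = (∑ i, Real.sinh (lam * r i) ^ 2) + n := by
    simp [Real.cosh_sq, Finset.sum_add_distrib, add_comm]
  have hn' : (1:ℝ) ≤ n := by exact_mod_cast hn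
  have hC16 : 16 * (n:ℝ) ≤ ∑ i, Real.cosh (lam * r i) ^ 2 := by
    nlinarith [hΦ, hCS]
  have hnS : 15 * (n:ℝ) ≤ ∑ i, Real.sinh (lam * r i) ^ 2 := by
    rw [hsplit] at hC16; linarith
  have hSsinh : S = lam ^ 2 * ∑ i, Real.sinh (lam * r i) ^ 2 := by
    rw [hS, Finset.mul_sum]; congr 1; ext i; ring
  have hfinal : ∑ i, (lam * Real.sinh (lam * (r i + δ i)) - lam * Real.sinh (lam * r i)) ^ 2
      ≤ (1/9) * S := by
    have h1 : ∑ i, (lam ^ 2 * Real.cosh (lam * r i) ^ 2)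
        = lam ^ 2 * ((∑ i, Real.sinh (lam * r i) ^ 2) + n) := by
      rw [← hsplit, Finset.mul_sum]
    have h2 : (0:ℝ) < lam ^ 2 := by positivity
    calc _ ≤ (1/16) * ∑ i, (lam ^ 2 * Real.cosh (lam * r i) ^ 2) := hpt
      _ = (1/16) * (lam ^ 2 * ((∑ i, Real.sinh (lam * r i) ^ 2) + n)) := by rw [h1]
      _ ≤ (1/9) * S := by rw [hSsinh]; nlinarith
  calc Real.sqrt (∑ i, (lam * Real.sinh (lam * (r i + δ i)) - lam * Real.sinh (lam * r i)) ^ 2)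
      ≤ Real.sqrt ((1/9) * S) := Real.sqrt_le_sqrt hfinal
    _ = (1/3) * Real.sqrt S := by
        rw [show (1/9:ℝ) = (1/3)^2 by norm_num, Real.sqrt_mul (by positivity), Real.sqrt_sq (by norm_num)]
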